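/- Let n ≥ 4 be an integer, let s and t be distinct vertices of the complete graph K_n, and let Γ_n = K_n with the edge {s,t} deleted. For every rational q that is not equal to any of 0, 1, ..., n-1, one has Z_{s|t}(Γ_n;q,-1) ≠ 0 and q · Z_{st}(Γ_n;q,-1) / Z_{s|t}(Γ_n;q,-1) = (n-2)/(q-n+1); moreover, if in addition 1 < q < n-1, then this ratio is strictly less than -1. -/

import Mathlib

open scoped Classical

/-- The number of connected components of the spanning subgraph `(V, A)`
(isolated vertices count as components). -/
noncomputable def kappa {V : Type} [Fintype V] (A : Finset (Sym2 V)) : ℕ :=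
  Nat.card (SimpleGraph.fromEdgeSet (↑A : Set (Sym2 V))).ConnectedComponent

/-- The random-cluster formulation of the Tutte polynomial:
`Z(G;q,γ) = Σ_{A ⊆ E} q^{κ(V,A)} γ^{|A|}`. -/
noncomputable def Z {V : Type} [Fintype V] (G : SimpleGraph V) (q γ : ℚ) : ℚ :=
  ∑ A ∈ G.edgeFinset.powerset, q ^ kappa A * γ ^ A.card

/-- `Z_{st}`: the contribution to `Z(G;q,γ)` from edge sets `A` in which
`s` and `t` lie in the same component of `(V,A)`. -/
noncomputable def Zst {V : Type} [Fintype V] (G : SimpleGraph V) (s t : V) (q γ : ℚ) : ℚ :=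
  ∑ A ∈ G.edgeFinset.powerset,
    if (SimpleGraph.fromEdgeSet (↑A : Set (Sym2 V))).Reachable s t then
      q ^ kappa A * γ ^ A.card else 0

/-- `Z_{s|t}`: the contribution to `Z(G;q,γ)` from edge sets `A` in which
`s` and `t` lie in different components of `(V,A)`. -/
noncomputable def Zsep {V : Type} [Fintype V] (G : SimpleGraph V) (s t : V) (q γ : ℚ) : ℚ :=
  ∑ A ∈ G.edgeFinset.powerset,
    if ¬ (SimpleGraph.fromEdgeSet (↑A : Set (Sym2 V))).Reachable s t then
      q ^ kappa A * γ ^ A.card else 0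

section Aux

open Finset SimpleGraph Polynomial

/-- edge is monochromatic under the coloring `f` -/
def isMono {V α : Type} (f : V → α) : Sym2 V → Prop :=
  Sym2.lift ⟨fun u v => f u = f v, fun _ _ => propext ⟨Eq.symm, Eq.symm⟩⟩

@[simp] lemma isMono_mk {V α : Type} (f : V → α) (u v : V) :
    isMono f s(u, v) ↔ f u = f v := Iff.rfl

lemma const_iff_mono {V α : Type} (f : V → α) (A : Finset (Sym2 V))
    (hA : ∀ e ∈ A, ¬ e.IsDiag) :
    (∀ u v, (SimpleGraph.fromEdgeSet (↑A : Set (Sym2 V))).Reachable u v → f u = f v)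
      ↔ ∀ e ∈ A, isMono f e := by
  constructor
  · intro h e he
    induction e with
    | _ u v =>
      rw [isMono_mk]
      have hne : u ≠ v := by
        intro huv; exact hA _ he (by simp [huv])
      exact h u v (SimpleGraph.Adj.reachable
        (by rw [fromEdgeSet_adj]; exact ⟨by exact_mod_cast he, hne⟩))
  · intro h u v hr
    obtain ⟨w⟩ := hr
    induction w with
    | nil => rfl
    | cons hadj p ih =>
      rw [fromEdgeSet_adj] at hadj
      have : isMono f s(_, _) := h _ (by exact_mod_cast hadj.1)
      rw [isMono_mk] at this
      exact this.trans ih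

lemma count_const {V : Type} [Fintype V] (G : SimpleGraph V) (k : ℕ) :
    Nat.card {f : V → Fin k // ∀ u v, G.Reachable u v → f u = f v}
      = k ^ Nat.card G.ConnectedComponent := by
  have e : (G.ConnectedComponent → Fin k) ≃
      {f : V → Fin k // ∀ u v, G.Reachable u v → f u = f v} :=
    { toFun := fun g => ⟨fun v => g (G.connectedComponentMk v), fun u v h => by
        exact congrArg g (ConnectedComponent.sound h)⟩
      invFun := fun f => Quot.lift f.1 (fun u v h => f.2 u v h)
      left_inv := fun g => by
        funext c
        induction c using SimpleGraph.ConnectedComponent.ind with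
        | _ v => rfl
      right_inv := fun f => rfl }
  rw [← Nat.card_congr e, Nat.card_fun]
  simp [mul_comm]

noncomputable def restrictEquiv {β γ : Type} (a b : β) (hab : a ≠ b) :
    {g : β → γ // g a = g b} ≃ ({c : β // c ≠ b} → γ) where
  toFun g x := g.1 x.1
  invFun h := ⟨fun c => if hc : c = b then h ⟨a, hab⟩ else h ⟨c, hc⟩, by simp [hab]⟩
  left_inv g := by
    ext c
    by_cases hc : c = b
    · subst hc
      simpa [hab] using g.2
    · simp [hc]
  right_inv h := by
    ext x
    simp [x.2]

lemma count_const_st {V : Type} [Fintype V] (G : SimpleGraph V) (s t : V) (k : ℕ) :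
    k * Nat.card {f : V → Fin k // (∀ u v, G.Reachable u v → f u = f v) ∧ f s = f t}
      = k ^ Nat.card G.ConnectedComponent * (if G.Reachable s t then k else 1) := by
  have e1 : {g : G.ConnectedComponent → Fin k //
      g (G.connectedComponentMk s) = g (G.connectedComponentMk t)} ≃
      {f : V → Fin k // (∀ u v, G.Reachable u v → f u = f v) ∧ f s = f t} :=
    { toFun := fun g => ⟨fun v => g.1 (G.connectedComponentMk v),
        ⟨fun u v h => congrArg g.1 (ConnectedComponent.sound h), g.2⟩⟩
      invFun := fun f => ⟨Quot.lift f.1 (fun u v h => f.2.1 u v h), f.2.2⟩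
      left_inv := fun g => by
        ext c
        induction c using SimpleGraph.ConnectedComponent.ind with
        | _ v => rfl
      right_inv := fun f => rfl }
  rw [← Nat.card_congr e1]
  by_cases hr : G.Reachable s t
  · rw [if_pos hr]
    have hmk : G.connectedComponentMk s = G.connectedComponentMk t :=
      ConnectedComponent.sound hr
    have e2 : {g : G.ConnectedComponent → Fin k //
        g (G.connectedComponentMk s) = g (G.connectedComponentMk t)} ≃
        (G.ConnectedComponent → Fin k) :=
      Equiv.subtypeUnivEquiv (fun g => by rw [hmk])
    rw [Nat.card_congr e2, Nat.card_fun, Nat.card_eq_fintype_card (α := Fin k),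
      Fintype.card_fin]
    ring
  · rw [if_neg hr]
    have hmk : G.connectedComponentMk s ≠ G.connectedComponentMk t := by
      intro h; exact hr (ConnectedComponent.exact h)
    rw [Nat.card_congr (restrictEquiv _ _ hmk), Nat.card_fun,
      Nat.card_eq_fintype_card (α := Fin k), Fintype.card_fin]
    have : Fintype G.ConnectedComponent := Fintype.ofFinite _
    have hcardne : Nat.card {c : G.ConnectedComponent //
        c ≠ G.connectedComponentMk t} = Nat.card G.ConnectedComponent - 1 := by
      rw [Nat.card_eq_fintype_card, Nat.card_eq_fintype_card]
      exact Set.card_ne_eq _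
    rw [hcardne]
    have hpos : 1 ≤ Nat.card G.ConnectedComponent :=
      Nat.one_le_iff_ne_zero.mpr (Nat.card_ne_zero.mpr ⟨⟨G.connectedComponentMk s⟩, inferInstance⟩)
    rw [mul_one, ← pow_succ']
    congr 1
    omega

lemma natcard_sub {α : Type} [Fintype α] (p : α → Prop) :
    (Nat.card {x // p x} : ℚ) = ∑ x : α, if p x then (1 : ℚ) else 0 := by
  rw [Nat.card_eq_fintype_card, Fintype.card_subtype, Finset.card_filter]
  push_cast [apply_ite (Nat.cast : ℕ → ℚ)]
  rfl

lemma sum_pows {α : Type} (M : Finset α) :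
    ∑ A ∈ M.powerset, (-1 : ℚ) ^ A.card = if M = ∅ then 1 else 0 := by
  have h := Finset.sum_powerset_neg_one_pow_card (x := M)
  have h2 : ((∑ A ∈ M.powerset, (-1 : ℤ) ^ A.card : ℤ) : ℚ)
      = ∑ A ∈ M.powerset, (-1 : ℚ) ^ A.card := by push_cast; rfl
  rw [← h2, h]
  split <;> simp

lemma sum_alt {V : Type} [Fintype V] (G : SimpleGraph V) (k : ℕ)
    (extra : (V → Fin k) → Prop) :
    ∑ A ∈ G.edgeFinset.powerset, (-1 : ℚ) ^ A.card *
      (Nat.card {f : V → Fin k //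
        (∀ u v, (SimpleGraph.fromEdgeSet (↑A : Set (Sym2 V))).Reachable u v → f u = f v)
          ∧ extra f} : ℚ)
    = (Nat.card {f : V → Fin k // (∀ u v, G.Adj u v → f u ≠ f v) ∧ extra f} : ℚ) := by
  have step1 : ∀ A ∈ G.edgeFinset.powerset,
      (-1 : ℚ) ^ A.card *
      (Nat.card {f : V → Fin k //
        (∀ u v, (SimpleGraph.fromEdgeSet (↑A : Set (Sym2 V))).Reachable u v → f u = f v)
          ∧ extra f} : ℚ)
      = ∑ f : V → Fin k,
          if (∀ e ∈ A, isMono f e) ∧ extra f then (-1 : ℚ) ^ A.card else 0 := by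
    intro A hA
    rw [mem_powerset] at hA
    have hdiag : ∀ e ∈ A, ¬ e.IsDiag := by
      intro e he
      have h1 := hA he
      rw [mem_edgeFinset] at h1
      exact G.not_isDiag_of_mem_edgeSet h1
    rw [natcard_sub, Finset.mul_sum]
    refine Finset.sum_congr rfl fun f _ => ?_
    rw [const_iff_mono f A hdiag]
    split <;> simp
  rw [Finset.sum_congr rfl step1, Finset.sum_comm]
  rw [natcard_sub]
  refine Finset.sum_congr rfl fun f _ => ?_
  set M : Finset (Sym2 V) := G.edgeFinset.filter (fun e => isMono f e) with hM
  have hMsub : M ⊆ G.edgeFinset := Finset.filter_subset _ _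
  by_cases hex : extra f
  · have hcongr : ∀ A ∈ G.edgeFinset.powerset,
        (if (∀ e ∈ A, isMono f e) ∧ extra f then (-1 : ℚ) ^ A.card else 0)
        = if A ∈ M.powerset then (-1 : ℚ) ^ A.card else 0 := by
      intro A hA
      rw [mem_powerset] at hA
      congr 1
      rw [eq_iff_iff]
      simp only [hex, and_true, mem_powerset, hM]
      constructor
      · intro h x hx
        rw [mem_filter]
        exact ⟨hA hx, h x hx⟩
      · intro h e he
        have := h he
        rw [mem_filter] at this
        exact this.2
    rw [Finset.sum_congr rfl hcongr, Finset.sum_ite_mem,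
      Finset.inter_eq_right.mpr (Finset.powerset_mono.mpr hMsub), sum_pows]
    have hMempty : M = ∅ ↔ ∀ u v, G.Adj u v → f u ≠ f v := by
      rw [Finset.filter_eq_empty_iff]
      constructor
      · intro h u v hadj heq
        have hmem : s(u, v) ∈ G.edgeFinset := by
          rw [mem_edgeFinset, mem_edgeSet]; exact hadj
        exact h hmem ((isMono_mk f u v).mpr heq)
      · intro h e he
        induction e with
        | _ u v =>
          rw [mem_edgeFinset, mem_edgeSet] at he
          exact fun hm => h u v he hm
    simp only [hMempty, hex, and_true]
  · simp only [hex, and_false, if_false, Finset.sum_const_zero]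

lemma sum_alt' {V : Type} [Fintype V] (G : SimpleGraph V) {inst : Fintype G.edgeSet} (k : ℕ)
    (extra : (V → Fin k) → Prop) :
    ∑ A ∈ (@edgeFinset V G inst).powerset, (-1 : ℚ) ^ A.card *
      (Nat.card {f : V → Fin k //
        (∀ u v, (SimpleGraph.fromEdgeSet (↑A : Set (Sym2 V))).Reachable u v → f u = f v)
          ∧ extra f} : ℚ)
    = (Nat.card {f : V → Fin k // (∀ u v, G.Adj u v → f u ≠ f v) ∧ extra f} : ℚ) := by
  convert sum_alt G k extra

lemma gamma_adj {n : ℕ} (s t u v : Fin n) :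
    ((⊤ : SimpleGraph (Fin n)).deleteEdges {s(s, t)}).Adj u v
      ↔ u ≠ v ∧ s(u, v) ≠ s(s, t) := by
  rw [deleteEdges_adj]
  simp

lemma count_B (n k : ℕ) (s t : Fin n) (hst : s ≠ t) :
    Nat.card {f : Fin n → Fin k //
        (∀ u v, ((⊤ : SimpleGraph (Fin n)).deleteEdges {s(s, t)}).Adj u v → f u ≠ f v)
          ∧ f s = f t}
      = k.descFactorial (n - 1) := by
  have e : {f : Fin n → Fin k //
        (∀ u v, ((⊤ : SimpleGraph (Fin n)).deleteEdges {s(s, t)}).Adj u v → f u ≠ f v)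
          ∧ f s = f t} ≃ ({x : Fin n // x ≠ t} ↪ Fin k) :=
    { toFun := fun f => ⟨fun x => f.1 x.1, by
        intro x y hxy
        by_contra hne
        have hxy1 : x.1 ≠ y.1 := fun h => hne (Subtype.ext h)
        have hedge : s(x.1, y.1) ≠ s(s, t) := by
          intro h
          rw [Sym2.eq_iff] at h
          rcases h with ⟨_, h2⟩ | ⟨h1, _⟩
          · exact y.2 h2
          · exact x.2 h1
        exact f.2.1 x.1 y.1 ((gamma_adj s t x.1 y.1).mpr ⟨hxy1, hedge⟩) hxy⟩
      invFun := fun g => ⟨fun v => if hv : v = t then g ⟨s, hst⟩ else g ⟨v, hv⟩, by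
        constructor
        · intro u v hadj
          rw [gamma_adj] at hadj
          obtain ⟨huv, hedge⟩ := hadj
          by_cases hu : u = t <;> by_cases hv : v = t
          · exact absurd (hu.trans hv.symm) huv
          · subst hu
            have hvs : v ≠ s := by
              intro h; exact hedge (by rw [h]; exact Sym2.eq_swap)
            simp only [dif_pos rfl, dif_neg hv]
            intro h
            exact hvs (Subtype.ext_iff.mp (g.injective h.symm)).symm.symm
          · subst hv
            have hus : u ≠ s := by
              intro h; exact hedge (by rw [h])
            simp only [dif_pos rfl, dif_neg hu]
            intro h
            exact hus (Subtype.ext_iff.mp (g.injective h))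
          · simp only [dif_neg hu, dif_neg hv]
            intro h
            exact huv (Subtype.ext_iff.mp (g.injective h))
        · simp [hst]⟩
      left_inv := fun f => by
        ext v
        dsimp
        by_cases hv : v = t
        · simp [hv, f.2.2]
          exact congrArg Fin.val f.2.2
        · simp [hv]
          rfl
      right_inv := fun g => by
        ext x
        simp [x.2] }
  rw [Nat.card_congr e, Nat.card_eq_fintype_card, Fintype.card_embedding_eq,
    Fintype.card_fin]
  congr 1
  have h := Set.card_ne_eq (a := t)
  rw [Fintype.card_fin] at h
  convert h using 2
  rfl

lemma count_A (n k : ℕ) (s t : Fin n) (hst : s ≠ t) :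
    Nat.card {f : Fin n → Fin k //
        ∀ u v, ((⊤ : SimpleGraph (Fin n)).deleteEdges {s(s, t)}).Adj u v → f u ≠ f v}
      = k.descFactorial n + k.descFactorial (n - 1) := by
  set P : (Fin n → Fin k) → Prop := fun f =>
    ∀ u v, ((⊤ : SimpleGraph (Fin n)).deleteEdges {s(s, t)}).Adj u v → f u ≠ f v with hP
  have hsplit : Nat.card {f : Fin n → Fin k // P f}
      = Nat.card {f : Fin n → Fin k // P f ∧ f s = f t}
        + Nat.card {f : Fin n → Fin k // P f ∧ ¬ (f s = f t)} := by
    rw [Nat.card_eq_fintype_card, Nat.card_eq_fintype_card, Nat.card_eq_fintype_card,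
      Fintype.card_subtype, Fintype.card_subtype, Fintype.card_subtype,
      ← Finset.filter_filter, ← Finset.filter_filter]
    exact (Finset.card_filter_add_card_filter_not
      (s := Finset.univ.filter P) (fun f : Fin n → Fin k => f s = f t)).symm
  have hinj : ∀ f : Fin n → Fin k, (P f ∧ ¬ (f s = f t)) ↔ Function.Injective f := by
    intro f
    constructor
    · rintro ⟨hPf, hne⟩ u v heq
      by_contra huv
      by_cases hedge : s(u, v) = s(s, t)
      · rw [Sym2.eq_iff] at hedge
        rcases hedge with ⟨h1, h2⟩ | ⟨h1, h2⟩
        · exact hne (h1 ▸ h2 ▸ heq)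
        · exact hne (h2 ▸ h1 ▸ heq).symm
      · exact hPf u v ((gamma_adj s t u v).mpr ⟨huv, hedge⟩) heq
    · intro hi
      refine ⟨fun u v hadj heq => ((gamma_adj s t u v).mp hadj).1 (hi heq),
        fun h => hst (hi h)⟩
  have h2 : Nat.card {f : Fin n → Fin k // P f ∧ ¬ (f s = f t)} = k.descFactorial n := by
    rw [Nat.card_congr (Equiv.subtypeEquivRight hinj),
      Nat.card_congr (Equiv.subtypeInjectiveEquivEmbedding _ _),
      Nat.card_eq_fintype_card, Fintype.card_embedding_eq, Fintype.card_fin,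
      Fintype.card_fin]
  rw [hsplit, h2, count_B n k s t hst, Nat.add_comm]

lemma cast_desc (k m : ℕ) :
    ((k.descFactorial m : ℕ) : ℚ) = ∏ i ∈ Finset.range m, ((k : ℚ) - i) := by
  induction m with
  | zero => simp
  | succ m ih =>
    rw [Finset.prod_range_succ, ← ih, Nat.descFactorial_succ]
    by_cases h : m ≤ k
    · push_cast [Nat.cast_sub h]
      ring
    · have hk : k < m := Nat.lt_of_not_le h
      rw [Nat.descFactorial_eq_zero_iff_lt.mpr hk]
      simp

lemma poly_nat_ext {p r : Polynomial ℚ} (h : ∀ k : ℕ, p.eval (k : ℚ) = r.eval (k : ℚ)) :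
    p = r := by
  have hsub : p - r = 0 := by
    apply Polynomial.eq_zero_of_infinite_isRoot
    apply Set.Infinite.mono ?_
      (Set.infinite_range_of_injective (f := (Nat.cast : ℕ → ℚ)) Nat.cast_injective)
    rintro x ⟨k, rfl⟩
    simp [Polynomial.IsRoot, h k]
  exact sub_eq_zero.mp hsub

end Aux
section Main
open Finset SimpleGraph Polynomial

lemma Zsum_eq (n : ℕ) (s t : Fin n) (hst : s ≠ t) (q : ℚ) :
    Zst ((⊤ : SimpleGraph (Fin n)).deleteEdges {s(s, t)}) s t q (-1)
      + Zsep ((⊤ : SimpleGraph (Fin n)).deleteEdges {s(s, t)}) s t q (-1)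
    = (∏ i ∈ range n, (q - i)) + ∏ i ∈ range (n - 1), (q - i) := by
  set G := (⊤ : SimpleGraph (Fin n)).deleteEdges {s(s, t)} with hG
  set P : Polynomial ℚ := ∑ A ∈ G.edgeFinset.powerset,
    Polynomial.C ((-1 : ℚ) ^ A.card) * Polynomial.X ^ kappa A with hP
  set R : Polynomial ℚ := (∏ i ∈ range n, (Polynomial.X - Polynomial.C (i : ℚ)))
    + ∏ i ∈ range (n - 1), (Polynomial.X - Polynomial.C (i : ℚ)) with hR
  have hevalP : ∀ x : ℚ, P.eval x
      = ∑ A ∈ G.edgeFinset.powerset, (-1 : ℚ) ^ A.card * x ^ kappa A := by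
    intro x
    rw [hP, Polynomial.eval_finset_sum]
    simp
  have hevalR : ∀ x : ℚ, R.eval x
      = (∏ i ∈ range n, (x - i)) + ∏ i ∈ range (n - 1), (x - i) := by
    intro x
    rw [hR]
    simp [Polynomial.eval_prod]
  have hPR : P = R := by
    apply poly_nat_ext
    intro k
    rw [hevalP, hevalR]
    have hterm : ∀ A ∈ G.edgeFinset.powerset,
        (-1 : ℚ) ^ A.card * (k : ℚ) ^ kappa A
        = (-1 : ℚ) ^ A.card * (Nat.card {f : Fin n → Fin k //
            (∀ u v, (SimpleGraph.fromEdgeSet (↑A : Set (Sym2 (Fin n)))).Reachable u v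
              → f u = f v) ∧ True} : ℚ) := by
      intro A _
      congr 1
      have hc : Nat.card {f : Fin n → Fin k //
            (∀ u v, (SimpleGraph.fromEdgeSet (↑A : Set (Sym2 (Fin n)))).Reachable u v
              → f u = f v) ∧ True}
          = Nat.card {f : Fin n → Fin k //
            ∀ u v, (SimpleGraph.fromEdgeSet (↑A : Set (Sym2 (Fin n)))).Reachable u v
              → f u = f v} :=
        Nat.card_congr (Equiv.subtypeEquivRight (by simp))
      rw [hc, count_const, Nat.cast_pow]
      rfl
    rw [Finset.sum_congr rfl hterm, sum_alt' G k (fun _ => True)]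
    have hcA : Nat.card {f : Fin n → Fin k // (∀ u v, G.Adj u v → f u ≠ f v) ∧ True}
        = Nat.card {f : Fin n → Fin k // ∀ u v, G.Adj u v → f u ≠ f v} :=
      Nat.card_congr (Equiv.subtypeEquivRight (by simp))
    rw [hcA, hG, count_A n k s t hst, Nat.cast_add, cast_desc, cast_desc]
  have hZ : Zst G s t q (-1) + Zsep G s t q (-1) = P.eval q := by
    rw [hevalP, Zst, Zsep, ← Finset.sum_add_distrib]
    refine Finset.sum_congr (by congr!) fun A _ => ?_
    by_cases h : (SimpleGraph.fromEdgeSet (↑A : Set (Sym2 (Fin n)))).Reachable s t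
    · rw [if_pos h, if_neg (not_not_intro h)]; ring
    · rw [if_neg h, if_pos h]; ring
  rw [hZ, hPR, hevalR]

lemma Zmix_eq (n : ℕ) (s t : Fin n) (hst : s ≠ t) (q : ℚ) :
    q * Zst ((⊤ : SimpleGraph (Fin n)).deleteEdges {s(s, t)}) s t q (-1)
      + Zsep ((⊤ : SimpleGraph (Fin n)).deleteEdges {s(s, t)}) s t q (-1)
    = q * ∏ i ∈ range (n - 1), (q - i) := by
  set G := (⊤ : SimpleGraph (Fin n)).deleteEdges {s(s, t)} with hG
  set P : Polynomial ℚ := ∑ A ∈ G.edgeFinset.powerset,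
    Polynomial.C ((-1 : ℚ) ^ A.card) * Polynomial.X ^ kappa A *
      (if (SimpleGraph.fromEdgeSet (↑A : Set (Sym2 (Fin n)))).Reachable s t then
        Polynomial.X else 1) with hP
  set R : Polynomial ℚ := Polynomial.X *
    ∏ i ∈ range (n - 1), (Polynomial.X - Polynomial.C (i : ℚ)) with hR
  have hevalP : ∀ x : ℚ, P.eval x
      = ∑ A ∈ G.edgeFinset.powerset, (-1 : ℚ) ^ A.card * x ^ kappa A *
        (if (SimpleGraph.fromEdgeSet (↑A : Set (Sym2 (Fin n)))).Reachable s t then x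
          else 1) := by
    intro x
    rw [hP, Polynomial.eval_finset_sum]
    refine Finset.sum_congr rfl fun A _ => ?_
    split <;> simp
  have hevalR : ∀ x : ℚ, R.eval x = x * ∏ i ∈ range (n - 1), (x - i) := by
    intro x
    rw [hR]
    simp [Polynomial.eval_prod]
  have hPR : P = R := by
    apply poly_nat_ext
    intro k
    rw [hevalP, hevalR]
    have hterm : ∀ A ∈ G.edgeFinset.powerset,
        (-1 : ℚ) ^ A.card * (k : ℚ) ^ kappa A *
          (if (SimpleGraph.fromEdgeSet (↑A : Set (Sym2 (Fin n)))).Reachable s t then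
            (k : ℚ) else 1)
        = (k : ℚ) * ((-1 : ℚ) ^ A.card * (Nat.card {f : Fin n → Fin k //
            (∀ u v, (SimpleGraph.fromEdgeSet (↑A : Set (Sym2 (Fin n)))).Reachable u v
              → f u = f v) ∧ f s = f t} : ℚ)) := by
      intro A _
      have hnat := count_const_st (SimpleGraph.fromEdgeSet (↑A : Set (Sym2 (Fin n)))) s t k
      simp only [kappa]
      by_cases hr : (SimpleGraph.fromEdgeSet (↑A : Set (Sym2 (Fin n)))).Reachable s t
      · rw [if_pos hr] at hnat ⊢
        have hc : (k : ℚ) * (Nat.card {f : Fin n → Fin k //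
            (∀ u v, (SimpleGraph.fromEdgeSet (↑A : Set (Sym2 (Fin n)))).Reachable u v
              → f u = f v) ∧ f s = f t} : ℚ)
            = (k : ℚ) ^ Nat.card
                (SimpleGraph.fromEdgeSet (↑A : Set (Sym2 (Fin n)))).ConnectedComponent
              * (k : ℚ) := by exact_mod_cast congrArg (Nat.cast : ℕ → ℚ) hnat
        linear_combination (-(-1 : ℚ) ^ A.card) * hc
      · rw [if_neg hr] at hnat ⊢
        have hc : (k : ℚ) * (Nat.card {f : Fin n → Fin k //
            (∀ u v, (SimpleGraph.fromEdgeSet (↑A : Set (Sym2 (Fin n)))).Reachable u v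
              → f u = f v) ∧ f s = f t} : ℚ)
            = (k : ℚ) ^ Nat.card
                (SimpleGraph.fromEdgeSet (↑A : Set (Sym2 (Fin n)))).ConnectedComponent
              * 1 := by exact_mod_cast congrArg (Nat.cast : ℕ → ℚ) hnat
        linear_combination (-(-1 : ℚ) ^ A.card) * hc
    rw [Finset.sum_congr rfl hterm, ← Finset.mul_sum,
      sum_alt' G k (fun f => f s = f t), hG, count_B n k s t hst, cast_desc]
  have hZ : q * Zst G s t q (-1) + Zsep G s t q (-1) = P.eval q := by
    rw [hevalP, Zst, Zsep, Finset.mul_sum, ← Finset.sum_add_distrib]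
    refine Finset.sum_congr (by congr!) fun A _ => ?_
    by_cases h : (SimpleGraph.fromEdgeSet (↑A : Set (Sym2 (Fin n)))).Reachable s t
    · rw [if_pos h, if_pos h, if_neg (not_not_intro h)]; ring
    · rw [if_neg h, if_neg h, if_pos h]; ring
  rw [hZ, hPR, hevalR]

end Main

/-- for `n ≥ 4`, distinct vertices `s,t` of `K_n`, and `Γ_n = K_n - {s,t}`,
if the rational `q` avoids `0, 1, …, n-1` then `Z_{s|t}(Γ_n;q,-1) ≠ 0`,
`q·Z_{st}(Γ_n;q,-1)/Z_{s|t}(Γ_n;q,-1) = (n-2)/(q-n+1)`, and if moreover `1 < q < n-1`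
then this ratio is strictly less than `-1`. -/
theorem complete_minus_edge_ratio (n : ℕ) (hn : 4 ≤ n) (s t : Fin n) (hst : s ≠ t)
    (q : ℚ) (hq : ∀ i : ℕ, i < n → q ≠ (i : ℚ)) :
    Zsep ((⊤ : SimpleGraph (Fin n)).deleteEdges {s(s, t)}) s t q (-1) ≠ 0 ∧
    q * Zst ((⊤ : SimpleGraph (Fin n)).deleteEdges {s(s, t)}) s t q (-1) /
      Zsep ((⊤ : SimpleGraph (Fin n)).deleteEdges {s(s, t)}) s t q (-1) =
      ((n : ℚ) - 2) / (q - n + 1) ∧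
    (1 < q → q < (n : ℚ) - 1 →
      q * Zst ((⊤ : SimpleGraph (Fin n)).deleteEdges {s(s, t)}) s t q (-1) /
        Zsep ((⊤ : SimpleGraph (Fin n)).deleteEdges {s(s, t)}) s t q (-1) < -1) := by
  set a := Zst ((⊤ : SimpleGraph (Fin n)).deleteEdges {s(s, t)}) s t q (-1) with ha
  set b := Zsep ((⊤ : SimpleGraph (Fin n)).deleteEdges {s(s, t)}) s t q (-1) with hb
  set Ep : ℚ := ∏ i ∈ Finset.range (n - 1), (q - i) with hEp
  set D : ℚ := ∏ i ∈ Finset.range n, (q - i) with hD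
  have h1 : a + b = D + Ep := Zsum_eq n s t hst q
  have h2 : q * a + b = q * Ep := Zmix_eq n s t hst q
  have hDE : D = Ep * (q - ((n : ℚ) - 1)) := by
    rw [hD, hEp]
    conv_lhs => rw [show n = (n - 1) + 1 from by omega]
    rw [Finset.prod_range_succ]
    congr 2
    push_cast [Nat.cast_sub (show 1 ≤ n by omega)]
    ring
  have hq0 : q ≠ 0 := by exact_mod_cast hq 0 (by omega)
  have hq1 : q - 1 ≠ 0 := by
    have := hq 1 (by omega)
    intro h
    apply this
    push_cast
    linarith
  have hqn : q - (n : ℚ) + 1 ≠ 0 := by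
    have := hq (n - 1) (by omega)
    intro h
    apply this
    push_cast [Nat.cast_sub (show 1 ≤ n by omega)]
    linarith
  have hEne : Ep ≠ 0 := by
    rw [hEp]
    apply Finset.prod_ne_zero_iff.mpr
    intro i hi
    rw [Finset.mem_range] at hi
    exact sub_ne_zero.mpr (hq i (by omega))
  have hbe : b * (q - 1) = q * Ep * (q - (n : ℚ) + 1) := by
    linear_combination q * h1 - h2 + q * hDE
  have hbne : b ≠ 0 := by
    intro h0
    rw [h0, zero_mul] at hbe
    exact (mul_ne_zero (mul_ne_zero hq0 hEne) hqn) hbe.symm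
  have hane : q * a * (q - 1) = Ep * ((n : ℚ) - 2) * q := by
    linear_combination (q - 1) * h2 - hbe
  have hratio : q * a / b = ((n : ℚ) - 2) / (q - (n : ℚ) + 1) := by
    rw [div_eq_div_iff hbne hqn]
    have key : (q * a * (q - (n : ℚ) + 1)) * (q - 1) = (((n : ℚ) - 2) * b) * (q - 1) := by
      linear_combination (q - (n : ℚ) + 1) * hane - (((n : ℚ)) - 2) * hbe
    exact mul_right_cancel₀ hq1 key
  refine ⟨hbne, hratio, ?_⟩
  intro hq1' hqn'
  rw [hratio]
  have hneg : q - (n : ℚ) + 1 < 0 := by linarith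
  rw [div_lt_iff_of_neg hneg]
  linarith
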